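/- Let q and r be distinct primes with {q, r} ≠ {2, 3}, let D = V ⋊ Z/r be as above, and let T = ⟨x, y | x^3 = y^2⟩ be the trefoil knot group. Then every homomorphism φ: T → D has abelian image (equivalently, factors through the abelianization T → Z). -/

import Mathlib

open Multiplicative

/-- Left multiplication by a unit, as a multiplicative automorphism of the additive
group of the field, written multiplicatively. -/
def unitMulAut (F : Type*) [Field F] : Fˣ →* MulAut (Multiplicative F) where
  toFun u := AddEquiv.toMultiplicative (AddAut.mulLeft u)
  map_one' := by ext x; first | rfl | (simp; rfl)
  map_mul' u v := by ext x; first | rfl | (simp [mul_assoc]; rfl)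

/-- The group `D = V ⋊ ℤ/r`, where `V` is the additive group of the field `F` and the
generator of `ℤ/r` acts by multiplication by `ζ = χ (ofAdd 1)`; multiplication is
`(v,i)·(w,j) = (v + ζ^i w, i+j)`. -/
abbrev DD {r : ℕ} (F : Type*) [Field F] (χ : Multiplicative (ZMod r) →* Fˣ) :=
  Multiplicative F ⋊[(unitMulAut F).comp χ] Multiplicative (ZMod r)
/-- The trefoil knot group ⟨x, y | x³ = y²⟩. -/
abbrev TrefoilGroup : Type :=
  PresentedGroup ({FreeGroup.of 0 ^ 3 * (FreeGroup.of 1 ^ 2)⁻¹} : Set (FreeGroup (Fin 2)))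

section Aux

variable {r : ℕ} {F : Type*} [Field F] {χ : Multiplicative (ZMod r) →* Fˣ}

lemma DD_mul_left (a b : DD F χ) :
    toAdd (a * b).left = toAdd a.left + (χ a.right : F) * toAdd b.left := rfl

lemma DD_comm_iff (a b : DD F χ) :
    Commute a b ↔
      ((χ a.right : F) - 1) * toAdd b.left = ((χ b.right : F) - 1) * toAdd a.left := by
  rw [Commute, SemiconjBy, SemidirectProduct.ext_iff]
  constructor
  · rintro ⟨h, -⟩
    have h' := congrArg toAdd h
    rw [DD_mul_left, DD_mul_left] at h'
    linear_combination h'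
  · intro h
    refine ⟨?_, mul_comm a.right b.right⟩
    have h' : toAdd (a * b).left = toAdd (b * a).left := by
      rw [DD_mul_left, DD_mul_left]; linear_combination h
    exact toAdd.injective h'

lemma chi_eq_one_iff (hr : r.Prime) (hχ : orderOf (χ (ofAdd 1)) = r)
    (g : Multiplicative (ZMod r)) : χ g = 1 ↔ g = 1 := by
  haveI : NeZero r := ⟨hr.pos.ne'⟩
  have hg : g = ofAdd (1 : ZMod r) ^ (toAdd g).val := by
    rw [← ofAdd_nsmul, nsmul_eq_mul, mul_one, ZMod.natCast_zmod_val, ofAdd_toAdd]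
  constructor
  · intro h
    have h1 : χ (ofAdd (1 : ZMod r)) ^ (toAdd g).val = 1 := by
      rw [← map_pow, ← hg, h]
    have hdvd : r ∣ (toAdd g).val := by
      have := orderOf_dvd_of_pow_eq_one h1; rwa [hχ] at this
    have hv0 : (toAdd g).val = 0 := Nat.eq_zero_of_dvd_of_lt hdvd (ZMod.val_lt _)
    have : toAdd g = 0 := (ZMod.val_eq_zero _).mp hv0
    exact toAdd.injective (by simpa using this)
  · rintro rfl
    exact map_one χ

lemma DD_one_iff (a : DD F χ) : a = 1 ↔ toAdd a.left = 0 ∧ a.right = 1 := by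
  rw [SemidirectProduct.ext_iff]
  constructor
  · rintro ⟨h1, h2⟩; exact ⟨by rw [h1]; rfl, h2⟩
  · rintro ⟨h1, h2⟩; exact ⟨toAdd.injective (by simpa using h1), h2⟩

lemma DD_commute_of_commute_ne_one (hr : r.Prime) (hχ : orderOf (χ (ofAdd 1)) = r)
    {z a b : DD F χ} (hz : z ≠ 1) (ha : Commute a z) (hb : Commute b z) :
    Commute a b := by
  rw [DD_comm_iff] at ha hb ⊢
  by_cases h0 : (χ z.right : F) - 1 = 0
  · have hz1 : z.right = 1 := by
      rw [← chi_eq_one_iff hr hχ]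
      exact Units.ext (by simpa [sub_eq_zero] using h0)
    have hvz : toAdd z.left ≠ 0 := by
      intro h; exact hz ((DD_one_iff z).mpr ⟨h, hz1⟩)
    rw [h0, zero_mul] at ha hb
    rcases mul_eq_zero.mp ha with ha' | ha'
    · rcases mul_eq_zero.mp hb with hb' | hb'
      · rw [ha', hb', zero_mul, zero_mul]
      · exact absurd hb' hvz
    · exact absurd ha' hvz
  · apply mul_left_cancel₀ h0
    linear_combination ((χ b.right : F) - 1) * ha - ((χ a.right : F) - 1) * hb

lemma DD_eq_one_of_pow {q : ℕ} (hr : r.Prime) [CharP F q]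
    {n : ℕ} (hnr : ¬ r ∣ n) (hnq : ¬ q ∣ n) {a : DD F χ} (h : a ^ n = 1) :
    a = 1 := by
  haveI : NeZero r := ⟨hr.pos.ne'⟩
  haveI : Fact r.Prime := ⟨hr⟩
  have hright : a.right = 1 := by
    have h1 : a.right ^ n = 1 := by
      have := congrArg SemidirectProduct.rightHom h
      rwa [map_pow, map_one] at this
    have h2 : (n : ZMod r) * toAdd a.right = 0 := by
      have := congrArg toAdd h1
      rwa [toAdd_pow, toAdd_one, nsmul_eq_mul] at this
    have h3 : (n : ZMod r) ≠ 0 := by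
      rwa [Ne, ZMod.natCast_eq_zero_iff]
    have := (mul_eq_zero.mp h2).resolve_left h3
    exact toAdd.injective (by simpa using this)
  have ha : a = SemidirectProduct.inl a.left := by
    ext <;> simp [hright]
  rw [ha, ← map_pow] at h
  have hln : a.left ^ n = 1 := SemidirectProduct.inl_injective (by simpa using h)
  have h2 : (n : F) * toAdd a.left = 0 := by
    have := congrArg toAdd hln
    rwa [toAdd_pow, toAdd_one, nsmul_eq_mul] at this
  have h3 : (n : F) ≠ 0 := by
    rwa [Ne, CharP.cast_eq_zero_iff F q]
  rw [ha]
  have := (mul_eq_zero.mp h2).resolve_left h3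
  rw [toAdd.injective (by simpa using this : toAdd a.left = toAdd 1), map_one]

end Aux

theorem trefoil_to_DD_abelian_image {q r : ℕ} (hq : q.Prime) (hr : r.Prime)
    (hqr : q ≠ r) (hqr23 : ({q, r} : Set ℕ) ≠ {2, 3})
    {F : Type*} [Field F] [Fintype F] (hF : Fintype.card F = q ^ (r - 1))
    (χ : Multiplicative (ZMod r) →* Fˣ) (hχ : orderOf (χ (ofAdd 1)) = r)
    (φ : TrefoilGroup →* DD F χ) :
    ∀ s t : TrefoilGroup, Commute (φ s) (φ t) := by
  -- the characteristic of F is q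
  haveI : CharP F (ringChar F) := ringChar.charP F
  obtain ⟨n, hp, hcard⟩ := FiniteField.card F (ringChar F)
  have hqp : q = ringChar F := by
    have hdvd : q ∣ ringChar F ^ (n : ℕ) := by
      rw [← hcard, hF]
      exact dvd_pow_self q (Nat.sub_ne_zero_of_lt hr.two_le)
    exact (Nat.prime_dvd_prime_iff_eq hq hp).mp (hq.dvd_of_dvd_pow hdvd)
  haveI hcq : CharP F q := hqp ▸ ringChar.charP F
  -- the images of the generators
  set a := φ (PresentedGroup.of 0) with ha
  set b := φ (PresentedGroup.of 1) with hb
  -- the trefoil relation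
  have hrel : a ^ 3 = b ^ 2 := by
    have h1 : (PresentedGroup.mk _ (FreeGroup.of 0 ^ 3 * (FreeGroup.of 1 ^ 2)⁻¹) :
        TrefoilGroup) = 1 := by
      apply (QuotientGroup.eq_one_iff _).mpr
      exact Subgroup.subset_normalClosure (Set.mem_singleton _)
    rw [map_mul, map_inv, map_pow, map_pow, mul_inv_eq_one] at h1
    have := congrArg φ h1
    rwa [map_pow, map_pow] at this
  -- the generators commute
  have hab : Commute a b := by
    by_cases hz : a ^ 3 = 1
    · -- both a³ = 1 and b² = 1; by order considerations one of a, b is trivial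
      have hb2 : b ^ 2 = 1 := hrel ▸ hz
      by_cases h3 : q = 3 ∨ r = 3
      · -- then neither q nor r is 2, so b = 1
        have hq2 : q ≠ 2 ∧ r ≠ 2 := by
          rcases h3 with h3 | h3
          · constructor
            · rw [h3]; decide
            · rintro rfl
              exact hqr23 (by rw [h3]; exact Set.pair_comm 3 2)
          · constructor
            · rintro rfl
              exact hqr23 (by rw [h3])
            · rw [h3]; decide
        have hb1 : b = 1 := by
          refine DD_eq_one_of_pow (q := q) hr ?_ ?_ hb2
          · intro h; exact hq2.2 ((Nat.prime_dvd_prime_iff_eq hr Nat.prime_two).mp h)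
          · intro h; exact hq2.1 ((Nat.prime_dvd_prime_iff_eq hq Nat.prime_two).mp h)
        rw [hb1]; exact Commute.one_right a
      · push_neg at h3
        have ha1 : a = 1 := by
          refine DD_eq_one_of_pow (q := q) hr ?_ ?_ hz
          · intro h; exact h3.2 ((Nat.prime_dvd_prime_iff_eq hr Nat.prime_three).mp h)
          · intro h; exact h3.1 ((Nat.prime_dvd_prime_iff_eq hq Nat.prime_three).mp h)
        rw [ha1]; exact Commute.one_left b
    · -- a³ = b² is a nontrivial central element; its centralizer is abelian
      exact DD_commute_of_commute_ne_one hr hχ hz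
        ((Commute.refl a).pow_right 3) (hrel ▸ (Commute.refl b).pow_right 2)
  -- propagate commutativity to the whole image
  intro s t
  have hmem : ∀ u : TrefoilGroup,
      u ∈ Subgroup.closure (Set.range (PresentedGroup.of :
        Fin 2 → TrefoilGroup)) := by
    intro u
    rw [PresentedGroup.closure_range_of]
    exact Subgroup.mem_top u
  refine Subgroup.closure_induction₂
    (p := fun x y _ _ => Commute (φ x) (φ y)) ?_ ?_ ?_ ?_ ?_ ?_ ?_ (hmem s) (hmem t)
  · rintro x y ⟨i, rfl⟩ ⟨j, rfl⟩
    fin_cases i <;> fin_cases j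
    · exact Commute.refl _
    · exact hab
    · exact hab.symm
    · exact Commute.refl _
  · intro x _; rw [map_one]; exact Commute.one_left _
  · intro x _; rw [map_one]; exact Commute.one_right _
  · intro x y z _ _ _ h1 h2; rw [map_mul]; exact h1.mul_left h2
  · intro y z x _ _ _ h1 h2; rw [map_mul]; exact h1.mul_right h2
  · intro x y _ _ h; rw [map_inv]; exact h.inv_left
  · intro x y _ _ h; rw [map_inv]; exact h.inv_right
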